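/- arXiv:1206.1835 — 5 statements merged into one kernel-verified Lean document; each statement's English description precedes it below -/
import Mathlib

section
/- Let A = ℚ[t̄][L̄_1,...,L̄_{2r}] graded with deg t̄ = 2 and deg L̄_j = 1, and let I be the ideal generated by {L̄_j² − t̄ : 1 ≤ j ≤ 2r}. Then the images in A/I of the elementary symmetric polynomials s̄_0, s̄_1, ..., s̄_{2r} in the L̄_j generate a free ℚ[t̄]-submodule of rank 2r+1. -/
open MvPolynomial

section Aux

lemma mesymm_zero (s : Multiset ℚ) : s.esymm 0 = 1 := by
  simp [Multiset.esymm]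

lemma mesymm_cons (a : ℚ) (s : Multiset ℚ) (k : ℕ) :
    (a ::ₘ s).esymm (k + 1) = s.esymm (k + 1) + a * s.esymm k := by
  rw [Multiset.esymm, Multiset.powersetCard_cons, Multiset.map_add, Multiset.sum_add,
    Multiset.map_map]
  congr 1
  rw [Multiset.esymm, ← Multiset.sum_map_mul_left]
  congr 1
  apply Multiset.map_congr rfl
  intro t _
  simp [Multiset.prod_cons]

lemma mesymm_eq_zero (s : Multiset ℚ) (k : ℕ) (h : Multiset.card s < k) :
    s.esymm k = 0 := by
  have : Multiset.powersetCard k s = 0 := by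
    rw [← Multiset.card_eq_zero, Multiset.card_powersetCard]
    exact Nat.choose_eq_zero_of_lt h
  rw [Multiset.esymm, this]
  simp

/-- Key combinatorial lemma: if a linear combination of the elementary symmetric
functions of every sign multiset vanishes, all coefficients vanish. -/
lemma key_lemma : ∀ (n : ℕ) (v : ℕ → Polynomial ℚ),
    (∀ s : Multiset ℚ, Multiset.card s = n → (∀ a ∈ s, a = 1 ∨ a = -1) →
      ∑ k ∈ Finset.range (n + 1), s.esymm k • v k = 0) →
    ∀ k ≤ n, v k = 0 := by
  intro n
  induction n with
  | zero =>
    intro v h k hk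
    interval_cases k
    have h0 := h 0 rfl (by simp)
    simpa [mesymm_zero] using h0
  | succ n ih =>
    intro v h k hk
    -- For every sign multiset s of card n, both partial sums vanish.
    have hAB : ∀ s : Multiset ℚ, Multiset.card s = n → (∀ a ∈ s, a = 1 ∨ a = -1) →
        (∑ k ∈ Finset.range (n + 1), s.esymm k • v k = 0) ∧
        (∑ k ∈ Finset.range (n + 1), s.esymm k • v (k + 1) = 0) := by
      intro s hcard hsign
      set A := ∑ k ∈ Finset.range (n + 1), s.esymm k • v k with hA
      set B := ∑ k ∈ Finset.range (n + 1), s.esymm k • v (k + 1) with hB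
      have expand : ∀ a : ℚ,
          ∑ k ∈ Finset.range (n + 2), (a ::ₘ s).esymm k • v k = A + a • B := by
        intro a
        have e1 : (∑ k ∈ Finset.range (n + 1), s.esymm (k + 1) • v (k + 1)) + v 0 = A := by
          rw [Finset.sum_range_succ, mesymm_eq_zero s (n + 1) (by omega), zero_smul,
            add_zero, hA, Finset.sum_range_succ' (fun k => s.esymm k • v k) n]
          simp [mesymm_zero]
        rw [Finset.sum_range_succ' (fun k => (a ::ₘ s).esymm k • v k)]
        simp only [mesymm_cons, mesymm_zero, one_smul, add_smul]
        rw [Finset.sum_add_distrib]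
        rw [add_right_comm, e1, hB, Finset.smul_sum]
        congr 1
        apply Finset.sum_congr rfl
        intro k _
        rw [mul_smul]
      have h1 := h (1 ::ₘ s) (by simp [hcard]) (by
        intro a ha
        rcases Multiset.mem_cons.mp ha with h' | h'
        · exact Or.inl h'
        · exact hsign a h')
      have h2 := h ((-1) ::ₘ s) (by simp [hcard]) (by
        intro a ha
        rcases Multiset.mem_cons.mp ha with h' | h'
        · exact Or.inr h'
        · exact hsign a h')
      rw [expand 1, one_smul] at h1
      rw [expand (-1), neg_smul, one_smul, ← sub_eq_add_neg] at h2
      have hA2 : (2 : Polynomial ℚ) * A = 0 := by linear_combination h1 + h2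
      have hB2 : (2 : Polynomial ℚ) * B = 0 := by linear_combination h1 - h2
      have two_ne : (2 : Polynomial ℚ) ≠ 0 := two_ne_zero
      exact ⟨by rcases mul_eq_zero.mp hA2 with h' | h' <;> [exact absurd h' two_ne; exact h'],
        by rcases mul_eq_zero.mp hB2 with h' | h' <;> [exact absurd h' two_ne; exact h']⟩
    have hA := ih v (fun s hc hs => (hAB s hc hs).1)
    have hB := ih (fun k => v (k + 1)) (fun s hc hs => (hAB s hc hs).2)
    rcases Nat.lt_or_ge k (n + 1) with h' | h'
    · exact hA k (by omega)
    · obtain ⟨m, rfl⟩ : ∃ m, k = m + 1 := ⟨k - 1, by omega⟩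
      exact hB m (by omega)

end Aux

/-- In `A = ℚ[t̄][L̄_1,...,L̄_{2r}]` modulo the ideal `I` generated by the
`L̄_j² − t̄`, the images of the elementary symmetric polynomials
`s̄_0, ..., s̄_{2r}` are linearly independent over `ℚ[t̄]`; hence they generate
a free `ℚ[t̄]`-submodule of rank `2r+1`. -/
theorem esymm_images_linearIndependent (r : ℕ) (hr : 1 ≤ r)
    (I : Ideal (MvPolynomial (Fin (2 * r)) (Polynomial ℚ)))
    (hI : I = Ideal.span
      {q | ∃ j : Fin (2 * r), q = X j ^ 2 - C Polynomial.X}) :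
    LinearIndependent (Polynomial ℚ)
      (fun k : Fin (2 * r + 1) =>
        Ideal.Quotient.mk I (esymm (Fin (2 * r)) (Polynomial ℚ) (k : ℕ))) := by
  classical
  rw [Fintype.linearIndependent_iff]
  intro g hg
  -- The base change `t ↦ X²`.
  set φ : Polynomial ℚ →+* Polynomial ℚ :=
    Polynomial.eval₂RingHom Polynomial.C (Polynomial.X ^ 2) with hφ
  have hφ_comp : ∀ p : Polynomial ℚ, φ p = p.comp (Polynomial.X ^ 2) := fun p => rfl
  have hφ_inj : Function.Injective φ := by
    intro p q hpq
    have h0 : (p - q).comp (Polynomial.X ^ 2) = 0 := by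
      rw [Polynomial.sub_comp, ← hφ_comp, ← hφ_comp, hpq, sub_self]
    rcases Polynomial.comp_eq_zero_iff.mp h0 with h' | ⟨_, h'⟩
    · exact sub_eq_zero.mp h'
    · exfalso
      have := congrArg Polynomial.natDegree h'
      simp [Polynomial.natDegree_X_pow] at this
  -- The combined linear relation as an element of `I`.
  have hmem : (∑ k : Fin (2 * r + 1),
      C (g k) * esymm (Fin (2 * r)) (Polynomial ℚ) (k : ℕ)) ∈ I := by
    rw [← Ideal.Quotient.eq_zero_iff_mem]
    set_option synthInstance.maxHeartbeats 1000000 in rw [map_sum, ← hg]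
    apply Finset.sum_congr rfl
    intro k _
    rw [← MvPolynomial.smul_eq_C_mul]
    rfl
  -- Evaluation homomorphisms attached to sign vectors.
  set Φ : (Fin (2 * r) → ℚ) → MvPolynomial (Fin (2 * r)) (Polynomial ℚ) →+* Polynomial ℚ :=
    fun ε => eval₂Hom φ (fun j => Polynomial.C (ε j) * Polynomial.X) with hΦ
  have hker : ∀ ε : Fin (2 * r) → ℚ, (∀ j, ε j = 1 ∨ ε j = -1) →
      ∀ p ∈ I, Φ ε p = 0 := by
    intro ε hε
    have hle : I ≤ RingHom.ker (Φ ε) := by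
      rw [hI, Ideal.span_le]
      rintro q ⟨j, rfl⟩
      have hε2 : ε j ^ 2 = 1 := by rcases hε j with h' | h' <;> rw [h'] <;> norm_num
      simp only [SetLike.mem_coe, RingHom.mem_ker, map_sub, map_pow, hΦ, eval₂Hom_X',
        eval₂Hom_C]
      rw [mul_pow, ← Polynomial.C_pow, hε2, Polynomial.C_1, one_mul]
      rw [hφ_comp, Polynomial.X_comp, sub_self]
    exact fun p hp => hle hp
  have hPhi_esymm : ∀ (ε : Fin (2 * r) → ℚ) (k : ℕ),
      Φ ε (esymm (Fin (2 * r)) (Polynomial ℚ) k) =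
        Polynomial.C ((Finset.univ.val.map ε).esymm k) * Polynomial.X ^ k := by
    intro ε k
    rw [MvPolynomial.esymm, map_sum, Finset.esymm_map_val, map_sum, Finset.sum_mul]
    apply Finset.sum_congr rfl
    intro t ht
    rw [map_prod]
    simp only [hΦ, eval₂Hom_X']
    rw [Finset.prod_mul_distrib, Finset.prod_const, map_prod]
    congr 2
    exact (Finset.mem_powersetCard.mp ht).2
  -- The coefficient family.
  set v : ℕ → Polynomial ℚ :=
    fun k => if h : k < 2 * r + 1 then φ (g ⟨k, h⟩) * Polynomial.X ^ k else 0 with hv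
  have hrel : ∀ s : Multiset ℚ, Multiset.card s = 2 * r → (∀ a ∈ s, a = 1 ∨ a = -1) →
      ∑ k ∈ Finset.range (2 * r + 1), s.esymm k • v k = 0 := by
    intro s hcard hsign
    have hlen : s.toList.length = 2 * r := by rw [Multiset.length_toList, hcard]
    set ε : Fin (2 * r) → ℚ := fun j => s.toList.get (Fin.cast hlen.symm j) with hε
    have hofFn : ∀ (l : List ℚ) (m : ℕ) (h : l.length = m),
        List.ofFn (fun j : Fin m => l.get (Fin.cast h.symm j)) = l := by
      intro l m h
      subst h
      simp [List.ofFn_get]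
    have hεs : Finset.univ.val.map ε = s := by
      rw [Fin.univ_val_map, hε, hofFn s.toList (2 * r) hlen]
      exact Multiset.coe_toList s
    have hsign' : ∀ j, ε j = 1 ∨ ε j = -1 := by
      intro j
      apply hsign
      rw [← Multiset.mem_toList]
      exact List.get_mem _ _
    have h0 := hker ε hsign' _ hmem
    rw [map_sum] at h0
    rw [Finset.sum_range (fun k => s.esymm k • v k), ← h0]
    apply Finset.sum_congr rfl
    intro k _
    rw [map_mul, eval₂Hom_C, hPhi_esymm, hεs, hv]
    simp only [Fin.is_lt, dif_pos, Fin.eta]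
    rw [Polynomial.smul_eq_C_mul]
    ring
  have hkey := key_lemma (2 * r) v hrel
  intro k
  have hvk := hkey (k : ℕ) (by omega)
  rw [hv] at hvk
  simp only [Fin.is_lt, dif_pos, Fin.eta] at hvk
  rcases mul_eq_zero.mp hvk with h' | h'
  · exact hφ_inj (by rw [h', map_zero])
  · exact absurd h' (pow_ne_zero _ Polynomial.X_ne_zero)
end

section
/- Let A = ℚ[t̄][L̄_1,...,L̄_{2r}] and I the ideal generated by {L̄_j² − t̄}. In A/I, every symmetric polynomial in L̄_1,...,L̄_{2r} (i.e., every element of the image of symmetric polynomials) is a ℚ[t̄]-linear combination of the images of s̄_0, s̄_1, ..., s̄_{2r}. -/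
open MvPolynomial Finset

namespace SymAux

variable {n : ℕ}

/-- Reduce all exponents mod 2. -/
noncomputable def Dmod (d : Fin n →₀ ℕ) : Fin n →₀ ℕ := d.mapRange (· % 2) (Nat.zero_mod 2)

/-- Total number of squares extracted. -/
def Hh (d : Fin n →₀ ℕ) : ℕ := ∑ j, d j / 2

/-- Indicator finsupp of a finset. -/
noncomputable def indT (s : Finset (Fin n)) : Fin n →₀ ℕ := ∑ i ∈ s, Finsupp.single i 1

lemma Dmod_apply (d : Fin n →₀ ℕ) (j : Fin n) : Dmod d j = d j % 2 := rfl

lemma indT_apply (s : Finset (Fin n)) (j : Fin n) :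
    indT s j = if j ∈ s then 1 else 0 := by
  classical
  rw [indT, Finsupp.finset_sum_apply]
  simp [Finsupp.single_apply]

lemma indT_support (s : Finset (Fin n)) : (indT s).support = s := by
  ext j
  simp only [Finsupp.mem_support_iff, indT_apply]
  split <;> simp_all

lemma sf_eq_indT {d : Fin n →₀ ℕ} (hd : ∀ j, d j ≤ 1) : d = indT d.support := by
  ext j
  rw [indT_apply]
  by_cases h : j ∈ d.support
  · rw [if_pos h]
    have h1 := Finsupp.mem_support_iff.mp h
    have h2 := hd j
    omega
  · rw [if_neg h]
    exact Finsupp.notMem_support_iff.mp h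

lemma coeff_esymm {R : Type*} [CommSemiring R] (m : ℕ) (d : Fin n →₀ ℕ) :
    coeff d (esymm (Fin n) R m) =
      if (∀ j, d j ≤ 1) ∧ d.support.card = m then 1 else 0 := by
  classical
  rw [esymm_eq_sum_monomial, coeff_sum]
  simp_rw [coeff_monomial]
  have hind : ∀ t : Finset (Fin n), (∑ i ∈ t, Finsupp.single i 1) = indT t := fun _ => rfl
  by_cases h : (∀ j, d j ≤ 1) ∧ d.support.card = m
  · rw [if_pos h, Finset.sum_eq_single_of_mem d.support]
    · rw [hind, if_pos (sf_eq_indT h.1).symm]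
    · rw [Finset.mem_powersetCard]; exact ⟨Finset.subset_univ _, h.2⟩
    · intro t _ hne
      rw [hind, if_neg]
      intro heq
      exact hne (by rw [← heq, indT_support])
  · rw [if_neg h, Finset.sum_eq_zero]
    intro t ht
    rw [hind, if_neg]
    intro heq
    apply h
    rw [Finset.mem_powersetCard] at ht
    constructor
    · intro j; rw [← heq, indT_apply]; split <;> omega
    · rw [← heq, indT_support]; exact ht.2

lemma exists_perm_image {α : Type*} [Fintype α] [DecidableEq α] {s t : Finset α}
    (h : s.card = t.card) : ∃ π : Equiv.Perm α, s.image π = t := by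
  have hc : sᶜ.card = tᶜ.card := by
    rw [Finset.card_compl, Finset.card_compl, h]
  let e : {x // x ∈ s} ≃ {x // x ∈ t} := Finset.equivOfCardEq h
  let e' : {x // x ∈ sᶜ} ≃ {x // x ∈ tᶜ} := Finset.equivOfCardEq hc
  let es : {x // ¬ x ∈ s} ≃ {x // x ∈ sᶜ} := Equiv.subtypeEquivRight (by simp)
  let et : {x // x ∈ tᶜ} ≃ {x // ¬ x ∈ t} := Equiv.subtypeEquivRight (by simp)
  let π : Equiv.Perm α :=
    (Equiv.sumCompl (· ∈ s)).symm.trans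
      ((Equiv.sumCongr e (es.trans (e'.trans et))).trans (Equiv.sumCompl (· ∈ t)))
  have hmem : ∀ a, a ∈ s ↔ π a ∈ t := by
    intro a
    by_cases ha : a ∈ s
    · have hπ : π a = (e ⟨a, ha⟩ : α) := by
        simp only [π, Equiv.trans_apply, Equiv.sumCompl_symm_apply_of_pos ha,
          Equiv.sumCongr_apply, Sum.map_inl, Equiv.sumCompl_apply_inl]
      rw [hπ]
      exact ⟨fun _ => (e ⟨a, ha⟩).2, fun _ => ha⟩
    · have hπ : π a = ((et (e' (es ⟨a, ha⟩))) : α) := by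
        simp only [π, Equiv.trans_apply, Equiv.sumCompl_symm_apply_of_neg ha,
          Equiv.sumCongr_apply, Sum.map_inr, Equiv.sumCompl_apply_inr, Equiv.trans_apply]
      rw [hπ]
      exact ⟨fun h' => absurd h' ha, fun h' => absurd h' ((et (e' (es ⟨a, ha⟩))).2)⟩
  refine ⟨π, ?_⟩
  apply Finset.eq_of_subset_of_card_le
  · intro b hb
    obtain ⟨a, ha, rfl⟩ := Finset.mem_image.mp hb
    exact (hmem a).mp ha
  · rw [Finset.card_image_of_injective _ π.injective, h]

lemma mapDomain_indT (π : Equiv.Perm (Fin n)) (s : Finset (Fin n)) :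
    Finsupp.mapDomain π (indT s) = indT (s.image π) := by
  classical
  rw [indT, indT, Finsupp.mapDomain_finset_sum,
    Finset.sum_image (fun a _ b _ h => π.injective h)]
  simp [Finsupp.mapDomain_single]


lemma Dmod_mapDomain (π : Equiv.Perm (Fin n)) (d : Fin n →₀ ℕ) :
    Dmod (Finsupp.mapDomain π d) = Finsupp.mapDomain π (Dmod d) := by
  ext j
  rw [Dmod_apply, Finsupp.mapDomain_equiv_apply, Finsupp.mapDomain_equiv_apply, Dmod_apply]

lemma Hh_mapDomain (π : Equiv.Perm (Fin n)) (d : Fin n →₀ ℕ) :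
    Hh (Finsupp.mapDomain π d) = Hh d := by
  unfold Hh
  simp_rw [Finsupp.mapDomain_equiv_apply]
  exact Equiv.sum_comp π.symm fun j => d j / 2

lemma mapDomain_symm_cancel (π : Equiv.Perm (Fin n)) (d : Fin n →₀ ℕ) :
    Finsupp.mapDomain ⇑π (Finsupp.mapDomain ⇑π.symm d) = d := by
  ext j
  simp [Finsupp.mapDomain_equiv_apply]

lemma mapDomain_cancel_symm (π : Equiv.Perm (Fin n)) (d : Fin n →₀ ℕ) :
    Finsupp.mapDomain ⇑π.symm (Finsupp.mapDomain ⇑π d) = d := by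
  ext j
  simp [Finsupp.mapDomain_equiv_apply]

lemma ml_mem_span {R : Type*} [CommSemiring R] {q : MvPolynomial (Fin n) R}
    (hq : q.IsSymmetric) (hml : ∀ d ∈ q.support, ∀ j, d j ≤ 1) :
    q ∈ Submodule.span R (Set.range fun k : Fin (n + 1) => esymm (Fin n) R (k : ℕ)) := by
  classical
  have hx : ∀ k : Fin (n + 1), ∃ t : Finset (Fin n), t.card = (k : ℕ) := by
    intro k
    obtain ⟨t, -, ht⟩ := Finset.exists_subset_card_eq
      (s := (Finset.univ : Finset (Fin n))) (n := (k : ℕ))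
      (by simpa using Nat.lt_succ_iff.mp k.isLt)
    exact ⟨t, ht⟩
  choose T hT using hx
  have key : q = ∑ k : Fin (n + 1), coeff (indT (T k)) q • esymm (Fin n) R (k : ℕ) := by
    ext d
    rw [coeff_sum]
    simp_rw [coeff_smul, coeff_esymm, smul_eq_mul]
    by_cases hsf : ∀ j, d j ≤ 1
    · have hcd : d.support.card ≤ n := by
        have := Finset.card_le_card (Finset.subset_univ d.support)
        simpa using this
      set k0 : Fin (n + 1) := ⟨d.support.card, Nat.lt_succ_of_le hcd⟩ with hk0
      rw [Finset.sum_eq_single_of_mem k0 (Finset.mem_univ _)]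
      · rw [if_pos ⟨hsf, rfl⟩, mul_one]
        obtain ⟨π, hπ⟩ := exists_perm_image (s := T k0) (t := d.support) (by rw [hT])
        have hmap : Finsupp.mapDomain π (indT (T k0)) = d := by
          rw [mapDomain_indT, hπ, ← sf_eq_indT hsf]
        calc coeff d q = coeff (Finsupp.mapDomain π (indT (T k0))) (rename π q) := by
              rw [hmap, hq π]
          _ = coeff (indT (T k0)) q := coeff_rename_mapDomain _ π.injective _ _
      · intro b _ hb
        rw [if_neg, mul_zero]
        rintro ⟨-, hcard⟩
        exact hb (Fin.ext hcard.symm)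
    · have h0 : coeff d q = 0 := by
        by_contra h
        exact hsf (hml d (MvPolynomial.mem_support_iff.mpr h))
      rw [h0, Finset.sum_eq_zero]
      intro b _
      rw [if_neg, mul_zero]
      rintro ⟨h1, -⟩
      exact hsf h1
  rw [key]
  exact Submodule.sum_mem _ fun k _ =>
    Submodule.smul_mem _ _ (Submodule.subset_span ⟨k, rfl⟩)

end SymAux

open SymAux in
/-- In `A = ℚ[t̄][L̄_1,...,L̄_{2r}]` modulo the ideal `I` generated by the
`L̄_j² − t̄`, the image of every symmetric polynomial in the `L̄_j` is a
`ℚ[t̄]`-linear combination of the images of `s̄_0, ..., s̄_{2r}`. -/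
theorem symmetric_image_mem_span_esymm (r : ℕ) (hr : 1 ≤ r)
    (I : Ideal (MvPolynomial (Fin (2 * r)) (Polynomial ℚ)))
    (hI : I = Ideal.span
      {q | ∃ j : Fin (2 * r), q = X j ^ 2 - C Polynomial.X}) :
    ∀ p : MvPolynomial (Fin (2 * r)) (Polynomial ℚ), p.IsSymmetric →
      Ideal.Quotient.mk I p ∈
        Submodule.span (Polynomial ℚ)
          (Set.range fun k : Fin (2 * r + 1) =>
            Ideal.Quotient.mk I (esymm (Fin (2 * r)) (Polynomial ℚ) (k : ℕ))) := by
  intro p hp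
  classical
  set f := Ideal.Quotient.mk I with hf
  have hX : ∀ j : Fin (2 * r), f (X j ^ 2) = f (C Polynomial.X) := by
    intro j
    rw [hf, Ideal.Quotient.mk_eq_mk_iff_sub_mem, hI]
    exact Ideal.subset_span ⟨j, rfl⟩
  have hmon : ∀ (d : Fin (2 * r) →₀ ℕ) (c : Polynomial ℚ),
      f (monomial d c) = f (monomial (Dmod d) (Polynomial.X ^ Hh d * c)) := by
    intro d c
    have hexp : ∀ (g : Fin (2 * r) →₀ ℕ) (c' : Polynomial ℚ),
        (monomial g c' : MvPolynomial (Fin (2 * r)) (Polynomial ℚ)) =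
          C c' * ∏ j, X j ^ g j := by
      intro g c'
      rw [monomial_eq]
      congr 1
      exact Finsupp.prod_fintype _ _ fun j => pow_zero _
    rw [hexp, hexp, map_mul, map_mul, map_prod, map_prod]
    have hterm : ∀ j : Fin (2 * r),
        f (X j ^ d j) = f (C Polynomial.X) ^ (d j / 2) * f (X j ^ Dmod d j) := by
      intro j
      conv_lhs => rw [← Nat.div_add_mod (d j) 2]
      rw [pow_add, pow_mul, map_mul, map_pow, hX j, Dmod_apply]
    simp_rw [hterm]
    rw [Finset.prod_mul_distrib, Finset.prod_pow_eq_pow_sum, C_mul, C_pow, map_mul, map_pow]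
    show _ = f (C Polynomial.X) ^ Hh d * f (C c) * _
    unfold Hh
    ring
  set q : MvPolynomial (Fin (2 * r)) (Polynomial ℚ) :=
    ∑ d ∈ p.support, monomial (Dmod d) (Polynomial.X ^ Hh d * coeff d p) with hqdef
  have hfq : f q = f p := by
    conv_rhs => rw [← p.support_sum_monomial_coeff]
    rw [hqdef, map_sum, map_sum]
    exact Finset.sum_congr rfl fun d _ => (hmon d _).symm
  have hco : ∀ (π : Equiv.Perm (Fin (2 * r))) (d : Fin (2 * r) →₀ ℕ),
      coeff (Finsupp.mapDomain π d) p = coeff d p := by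
    intro π d
    conv_lhs => rw [← hp π]
    exact coeff_rename_mapDomain _ π.injective _ _
  have hml : ∀ d ∈ q.support, ∀ j, d j ≤ 1 := by
    intro d hd j
    rw [MvPolynomial.mem_support_iff, hqdef, coeff_sum] at hd
    obtain ⟨d0, -, h0⟩ := Finset.exists_ne_zero_of_sum_ne_zero hd
    rw [coeff_monomial] at h0
    by_cases he : Dmod d0 = d
    · rw [← he, Dmod_apply]
      omega
    · rw [if_neg he] at h0
      exact absurd rfl h0
  have hqs : q.IsSymmetric := by
    intro π
    rw [hqdef, map_sum]
    simp_rw [rename_monomial]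
    refine Finset.sum_nbij' (fun d => Finsupp.mapDomain π d)
      (fun d => Finsupp.mapDomain π.symm d) ?_ ?_ ?_ ?_ ?_
    · intro d hd
      rw [MvPolynomial.mem_support_iff] at hd ⊢
      rw [hco]
      exact hd
    · intro d hd
      rw [MvPolynomial.mem_support_iff] at hd ⊢
      rw [← hco π (Finsupp.mapDomain (⇑π.symm) d), mapDomain_symm_cancel]
      exact hd
    · intro d _
      exact mapDomain_cancel_symm π d
    · intro d _
      exact mapDomain_symm_cancel π d
    · intro d _
      rw [← Dmod_mapDomain, ← Hh_mapDomain π d, ← hco π d]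
  have h1 := ml_mem_span (n := 2 * r) hqs hml
  have h2 := Submodule.mem_map_of_mem
    (f := (Ideal.Quotient.mkₐ (Polynomial ℚ) I).toLinearMap) h1
  rw [Submodule.map_span, ← Set.range_comp] at h2
  simp only [AlgHom.toLinearMap_apply, Ideal.Quotient.mkₐ_eq_mk, Function.comp_def] at h2
  rw [← hfq]
  exact h2
end

section
/- Let ā, x̄ be elements of a commutative ℚ-algebra satisfying ā^{2r} + 2x̄·ā^{2r−1} = 0 (r ≥ 1). Then for any formal power series identity f(y) = g_1(y²) + y·g_2(y²) with f(y) = ((e^y−1)/y)^{2r−1}, applied as polynomials truncated appropriately in a ring where ā is nilpotent of order ≤ 4r, one has ā^{2r−1}·f(ā) = ā^{2r−1}·(g_1(4x̄²) − 2x̄·g_2(4x̄²)). -/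
open PowerSeries

/-- Substitution of `X^2` into a formal power series: `(substSq f)(y) = f(y²)`. -/
noncomputable def substSq (f : PowerSeries ℚ) : PowerSeries ℚ :=
  PowerSeries.mk fun n => if 2 ∣ n then PowerSeries.coeff (n / 2) f else 0

lemma sum_range_two_mul_aux {M : Type*} [AddCommMonoid M] (n : ℕ) (h : ℕ → M) :
    ∑ i ∈ Finset.range (2 * n), h i = ∑ i ∈ Finset.range n, (h (2 * i) + h (2 * i + 1)) := by
  induction n with
  | zero => simp
  | succ n ih =>
      have : 2 * (n + 1) = (2 * n + 1) + 1 := by ring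
      rw [this, Finset.sum_range_succ, Finset.sum_range_succ, ih, Finset.sum_range_succ,
        add_assoc]

/-- Let `ā, x̄` be elements of a commutative `ℚ`-algebra with
`ā^{2r} + 2x̄ ā^{2r−1} = 0` and `ā` nilpotent of order `≤ 4r`.  If
`f(y) = ((e^y−1)/y)^{2r−1}` decomposes as `f(y) = g₁(y²) + y·g₂(y²)`, then,
applying the power series as suitably truncated polynomials, one has
`ā^{2r−1}·f(ā) = ā^{2r−1}·(g₁(4x̄²) − 2x̄·g₂(4x̄²))`. -/
theorem a_pow_mul_series_eval (A : Type*) [CommRing A] [Algebra ℚ A]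
    (r : ℕ) (hr : 1 ≤ r) (a x : A)
    (hrel : a ^ (2 * r) + 2 * x * a ^ (2 * r - 1) = 0)
    (hnil : a ^ (4 * r) = 0)
    (g₁ g₂ : PowerSeries ℚ)
    (hg : (PowerSeries.mk fun k => ((k + 1).factorial : ℚ)⁻¹) ^ (2 * r - 1) =
      substSq g₁ + X * substSq g₂) :
    a ^ (2 * r - 1) *
      Polynomial.aeval a
        (trunc (4 * r)
          ((PowerSeries.mk fun k => ((k + 1).factorial : ℚ)⁻¹) ^ (2 * r - 1))) =
    a ^ (2 * r - 1) *
      (Polynomial.aeval (4 * x ^ 2) (trunc (2 * r + 1) g₁)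
        - 2 * x * Polynomial.aeval (4 * x ^ 2) (trunc (2 * r + 1) g₂)) := by
  set f : PowerSeries ℚ := (PowerSeries.mk fun k => ((k + 1).factorial : ℚ)⁻¹) ^ (2 * r - 1)
    with hf
  have h2r : 2 * r - 1 + 1 = 2 * r := by omega
  have hstep : a ^ (2 * r - 1) * a = -(2 * x) * a ^ (2 * r - 1) := by
    rw [← pow_succ, h2r]
    linear_combination hrel
  have h1 : ∀ k, a ^ (2 * r - 1) * a ^ k = (-(2 * x)) ^ k * a ^ (2 * r - 1) := by
    intro k
    induction k with
    | zero => simp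
    | succ k ih =>
        rw [pow_succ, ← mul_assoc, ih, mul_assoc, hstep, pow_succ]
        ring
  have h0 : ∀ n, 2 * r + 1 ≤ n → (-(2 * x)) ^ n * a ^ (2 * r - 1) = 0 := by
    intro n hn
    have hz : (-(2 * x)) ^ (2 * r + 1) * a ^ (2 * r - 1) = 0 := by
      rw [← h1, ← pow_add]
      have : 2 * r - 1 + (2 * r + 1) = 4 * r := by omega
      rw [this, hnil]
    calc (-(2 * x)) ^ n * a ^ (2 * r - 1)
        = (-(2 * x)) ^ (n - (2 * r + 1)) * ((-(2 * x)) ^ (2 * r + 1) * a ^ (2 * r - 1)) := by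
          rw [← mul_assoc, ← pow_add]
          congr 2
          omega
      _ = 0 := by rw [hz, mul_zero]
  -- coefficient relations
  have hgc1 : ∀ m, PowerSeries.coeff (2 * m) f = PowerSeries.coeff m g₁ := by
    intro m
    have h := congrArg (PowerSeries.coeff (2 * m)) hg
    rw [map_add] at h
    have hx : PowerSeries.coeff (2 * m) (X * substSq g₂) = 0 := by
      rcases Nat.eq_zero_or_pos m with hm | hm
      · subst hm; simp
      · have : 2 * m = (2 * m - 1) + 1 := by omega
        rw [this, coeff_succ_X_mul]
        simp only [substSq, coeff_mk]
        rw [if_neg]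
        omega
    rw [hx, add_zero] at h
    simpa [substSq, coeff_mk, Nat.mul_div_cancel_left m (by norm_num : 0 < 2)] using h
  have hgc2 : ∀ m, PowerSeries.coeff (2 * m + 1) f = PowerSeries.coeff m g₂ := by
    intro m
    have h := congrArg (PowerSeries.coeff (2 * m + 1)) hg
    rw [map_add] at h
    have hx : PowerSeries.coeff (2 * m + 1) (substSq g₁) = 0 := by
      simp only [substSq, coeff_mk]
      rw [if_neg]
      omega
    rw [hx, zero_add, coeff_succ_X_mul] at h
    simpa [substSq, coeff_mk, Nat.mul_div_cancel_left m (by norm_num : 0 < 2)] using h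
  -- express LHS as a sum
  have h4r : 4 * r = (4 * r - 1) + 1 := by omega
  have hdeg : (trunc (4 * r) f).natDegree < 4 * r := by
    rw [h4r]; exact natDegree_trunc_lt f _
  have hdeg1 : (trunc (2 * r + 1) g₁).natDegree < 2 * r + 1 := natDegree_trunc_lt g₁ _
  have hdeg2 : (trunc (2 * r + 1) g₂).natDegree < 2 * r + 1 := natDegree_trunc_lt g₂ _
  rw [Polynomial.aeval_eq_sum_range' hdeg, Polynomial.aeval_eq_sum_range' hdeg1,
    Polynomial.aeval_eq_sum_range' hdeg2]
  simp only [coeff_trunc]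
  have hcoeff : ∀ n (hn : n < 4 * r),
      (if n < 4 * r then PowerSeries.coeff n f else 0) = PowerSeries.coeff n f := by
    intro n hn; rw [if_pos hn]
  -- define the common value
  have key : ∀ (N : ℕ), 2 * r + 1 ≤ N →
      ∑ n ∈ Finset.range N, PowerSeries.coeff n f • ((-(2 * x)) ^ n * a ^ (2 * r - 1)) =
      ∑ n ∈ Finset.range (2 * r + 1),
        PowerSeries.coeff n f • ((-(2 * x)) ^ n * a ^ (2 * r - 1)) := by
    intro N hN
    symm
    apply Finset.sum_subset
    · intro i hi
      simp only [Finset.mem_range] at *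
      omega
    · intro i hi hni
      simp only [Finset.mem_range, not_lt] at hni
      rw [h0 i hni, smul_zero]
  -- LHS
  have hLHS : a ^ (2 * r - 1) *
      ∑ n ∈ Finset.range (4 * r),
        (if n < 4 * r then PowerSeries.coeff n f else 0) • a ^ n =
      ∑ n ∈ Finset.range (2 * r + 1),
        PowerSeries.coeff n f • ((-(2 * x)) ^ n * a ^ (2 * r - 1)) := by
    rw [Finset.mul_sum]
    rw [← key (4 * r) (by omega)]
    apply Finset.sum_congr rfl
    intro n hn
    simp only [Finset.mem_range] at hn
    rw [if_pos hn, mul_smul_comm, h1]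
  rw [hLHS]
  -- RHS
  have hRHS : ∀ n : ℕ, n < 2 * r + 1 → True := fun _ _ => trivial
  rw [mul_sub, Finset.mul_sum]
  rw [show (2 * x * ∑ i ∈ Finset.range (2 * r + 1),
      (if i < 2 * r + 1 then PowerSeries.coeff i g₂ else 0) • (4 * x ^ 2) ^ i) =
      ∑ i ∈ Finset.range (2 * r + 1),
      (if i < 2 * r + 1 then PowerSeries.coeff i g₂ else 0) • (2 * x * (4 * x ^ 2) ^ i) by
    rw [Finset.mul_sum]; exact Finset.sum_congr rfl fun i _ => (mul_smul_comm _ _ _)]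
  rw [mul_comm (a ^ (2 * r - 1))]
  rw [Finset.sum_mul, ← Finset.sum_sub_distrib]
  rw [← key (2 * (2 * r + 1)) (by omega), sum_range_two_mul_aux]
  apply Finset.sum_congr rfl
  intro m hm
  simp only [Finset.mem_range] at hm
  rw [if_pos hm, if_pos hm, hgc1 m, hgc2 m]
  have e1 : (-(2 * x)) ^ (2 * m) = (4 * x ^ 2) ^ m := by
    rw [pow_mul]; congr 1; ring
  have e2 : (-(2 * x)) ^ (2 * m + 1) = -(2 * x * (4 * x ^ 2) ^ m) := by
    rw [pow_succ, e1]; ring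
  rw [e1, e2]
  simp only [Algebra.smul_def]
  ring
end

section
/- Let M be the 2×2 matrix over ℚ[[t]] given by M = [[g₁(4t), −2g₂(4t)], [q(t)g₁(4t) − 2t·p(t)g₂(4t), p(t)g₁(4t) − 2q(t)g₂(4t)]], where p(t) = sinh(√t)/√t, q(t) = cosh(√t), and g₁, g₂ are as in the even/odd decomposition of ((e^y−1)/y)^{2r−1}. Then det M = p(t)^{4r−1}. -/
open PowerSeries

lemma coeff_substSq (f : PowerSeries ℚ) (n : ℕ) :
    PowerSeries.coeff n (substSq f) =
      if 2 ∣ n then PowerSeries.coeff (n / 2) f else 0 := by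
  simp [substSq]

lemma coeff_substSq_even (f : PowerSeries ℚ) (k : ℕ) :
    PowerSeries.coeff (2 * k) (substSq f) = PowerSeries.coeff k f := by
  simp [coeff_substSq, Nat.mul_div_cancel_left]

lemma substSq_injective : Function.Injective substSq := by
  intro f g h
  ext n
  have := congrArg (PowerSeries.coeff (2 * n)) h
  simpa [coeff_substSq_even] using this

lemma substSq_sub (f g : PowerSeries ℚ) : substSq (f - g) = substSq f - substSq g := by
  ext n
  simp only [coeff_substSq, map_sub]
  split <;> simp

lemma substSq_one : substSq 1 = 1 := by
  ext n
  rcases n with _ | m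
  · simp [coeff_substSq]
  · simp only [coeff_substSq, PowerSeries.coeff_one, Nat.succ_ne_zero, if_false]
    split_ifs with h1 h2
    · exact absurd h2 (by omega)
    · rfl
    · rfl

lemma substSq_C (c : ℚ) : substSq (PowerSeries.C c) = PowerSeries.C c := by
  ext n
  rcases n with _ | m
  · simp [coeff_substSq]
  · simp only [coeff_substSq, PowerSeries.coeff_C, Nat.succ_ne_zero, if_false]
    split_ifs with h1 h2
    · exact absurd h2 (by omega)
    · rfl
    · rfl

lemma substSq_X : substSq X = X ^ 2 := by
  ext n
  simp only [coeff_substSq, PowerSeries.coeff_X, PowerSeries.coeff_X_pow]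
  split_ifs <;> first | rfl | omega

lemma substSq_mul (f g : PowerSeries ℚ) : substSq (f * g) = substSq f * substSq g := by
  ext n
  rw [coeff_substSq, PowerSeries.coeff_mul, PowerSeries.coeff_mul,
    Finset.Nat.sum_antidiagonal_eq_sum_range_succ_mk,
    Finset.Nat.sum_antidiagonal_eq_sum_range_succ_mk]
  by_cases hn : 2 ∣ n
  · obtain ⟨k, rfl⟩ := hn
    rw [if_pos ⟨k, rfl⟩, Nat.mul_div_cancel_left _ (by norm_num)]
    have himg : Finset.image (fun a => 2 * a) (Finset.range (k + 1)) ⊆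
        Finset.range (2 * k + 1) := by
      intro i hi
      simp only [Finset.mem_image, Finset.mem_range] at hi ⊢
      obtain ⟨a, ha, rfl⟩ := hi
      omega
    rw [← Finset.sum_subset himg (by
      intro i hi hni
      simp only [Finset.mem_image, Finset.mem_range] at hi hni
      have : ¬ 2 ∣ i := by
        rintro ⟨a, rfl⟩; exact hni ⟨a, by omega, rfl⟩
      rw [coeff_substSq, if_neg this, zero_mul]),
      Finset.sum_image (by intro x _ y _ h; simp only at h; omega)]
    apply Finset.sum_congr rfl
    intro a ha
    simp only [Finset.mem_range] at ha
    have h1 : 2 * k - 2 * a = 2 * (k - a) := by omega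
    rw [coeff_substSq_even, h1, coeff_substSq_even]
  · rw [if_neg hn]
    symm
    apply Finset.sum_eq_zero
    intro i hi
    simp only [Finset.mem_range] at hi
    by_cases h2 : 2 ∣ i
    · have : ¬ 2 ∣ (n - i) := by omega
      rw [coeff_substSq (f := g), if_neg this, mul_zero]
    · rw [coeff_substSq, if_neg h2, zero_mul]

lemma substSq_pow (f : PowerSeries ℚ) (n : ℕ) : substSq (f ^ n) = substSq f ^ n := by
  induction n with
  | zero => simpa using substSq_one
  | succ m ih => rw [pow_succ, pow_succ, substSq_mul, ih]

lemma rescale_substSq (c : ℚ) (f : PowerSeries ℚ) :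
    rescale c (substSq f) = substSq (rescale (c ^ 2) f) := by
  ext n
  simp only [coeff_rescale, coeff_substSq]
  split_ifs with h
  · obtain ⟨k, rfl⟩ := h
    rw [Nat.mul_div_cancel_left _ (by norm_num : 0 < 2), ← pow_mul]
  · rw [mul_zero]

lemma rescale_neg_one_substSq (f : PowerSeries ℚ) :
    rescale (-1 : ℚ) (substSq f) = substSq f := by
  rw [rescale_substSq]
  norm_num [rescale_one]

lemma XE_eq : X * (PowerSeries.mk fun k => ((k + 1).factorial : ℚ)⁻¹) = exp ℚ - 1 := by
  ext n
  rcases n with _ | m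
  · simp [PowerSeries.coeff_zero_X_mul, constantCoeff_exp]
  · rw [PowerSeries.coeff_succ_X_mul, map_sub, PowerSeries.coeff_exp]
    simp [Nat.factorial]

lemma sinh_eq : exp ℚ - rescale (-1 : ℚ) (exp ℚ) =
    2 * (X * substSq (PowerSeries.mk fun k => ((2 * k + 1).factorial : ℚ)⁻¹)) := by
  have hC : (2 : ℚ⟦X⟧) = PowerSeries.C 2 := (map_ofNat _ 2).symm
  ext n
  rw [map_sub, coeff_rescale, PowerSeries.coeff_exp, hC,
    PowerSeries.coeff_C_mul]
  rcases n with _ | m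
  · simp
  · rw [PowerSeries.coeff_succ_X_mul, coeff_substSq]
    rcases Nat.even_or_odd m with he | ho
    · obtain ⟨k, rfl⟩ := he
      rw [if_pos ⟨k, by omega⟩]
      have h2 : (k + k) / 2 = k := by omega
      rw [h2, PowerSeries.coeff_mk]
      have h3 : ((-1 : ℚ)) ^ (k + k + 1) = -1 := by
        rw [pow_succ, Even.neg_one_pow ⟨k, rfl⟩, one_mul]
      rw [h3]
      have h4 : 2 * k + 1 = k + k + 1 := by omega
      rw [h4]
      simp [algebraMap]
      ring
    · obtain ⟨k, rfl⟩ := ho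
      rw [if_neg (by omega)]
      have h3 : ((-1 : ℚ)) ^ (2 * k + 1 + 1) = 1 := Even.neg_one_pow ⟨k + 1, by ring⟩
      rw [h3]
      simp

set_option maxHeartbeats 1000000 in
lemma key_identity (r : ℕ) (hr : 1 ≤ r) (g₁ g₂ : PowerSeries ℚ)
    (hg : (PowerSeries.mk fun k => ((k + 1).factorial : ℚ)⁻¹) ^ (2 * r - 1) =
      substSq g₁ + X * substSq g₂) :
    (rescale 4 g₁) ^ 2 - 4 * X * (rescale 4 g₂) ^ 2 =
      (PowerSeries.mk fun k => ((2 * k + 1).factorial : ℚ)⁻¹) ^ (4 * r - 2) := by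
  set E : PowerSeries ℚ := PowerSeries.mk fun k => ((k + 1).factorial : ℚ)⁻¹ with hE
  set P : PowerSeries ℚ := PowerSeries.mk fun k => ((2 * k + 1).factorial : ℚ)⁻¹ with hP
  set S : PowerSeries ℚ := exp ℚ with hS
  set T : PowerSeries ℚ := rescale (-1 : ℚ) S with hT
  have hC2 : (PowerSeries.C 2 : ℚ⟦X⟧) = 2 := map_ofNat _ 2
  have hC4 : (PowerSeries.C 4 : ℚ⟦X⟧) = 4 := map_ofNat _ 4
  have hST : S * T = 1 := by
    have h := exp_mul_exp_eq_exp_add (1 : ℚ) (-1)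
    rw [rescale_one] at h
    norm_num at h
    exact h
  have hS2 : S ^ 2 = rescale (2 : ℚ) S := by
    have h := exp_pow_eq_rescale_exp (A := ℚ) 2
    simpa using h
  have hT2 : T ^ 2 = rescale (2 : ℚ) T := by
    have h := exp_mul_exp_eq_exp_add (-1 : ℚ) (-1)
    have h2 : rescale (2 : ℚ) T = rescale (-2 : ℚ) S := by
      rw [hT, rescale_rescale]; norm_num
    rw [pow_two, hT, h2]
    convert h using 2
    norm_num
  -- the central square identity
  have hXE : X * E = S - 1 := by rw [hE, hS]; exact XE_eq
  clear_value E P S T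
  have hprod : rescale (2 : ℚ) ((X * E) * rescale (-1 : ℚ) (X * E)) = -(S - T) ^ 2 := by
    rw [hXE, map_sub, map_one, ← hT]
    have e1 : (S - 1) * (T - 1) = 2 - S - T := by linear_combination hST
    rw [e1, map_sub, map_sub, ← hS2, ← hT2]
    have e2 : rescale (2 : ℚ) (2 : ℚ⟦X⟧) = 2 := map_ofNat _ 2
    rw [e2]
    linear_combination (-2 : ℚ⟦X⟧) * hST
  have hL : (X * E) * rescale (-1 : ℚ) (X * E) = -(X ^ 2 * (E * rescale (-1 : ℚ) E)) := by
    rw [map_mul, rescale_neg_one_X]; ring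
  have hW : rescale (2 : ℚ) (E * rescale (-1 : ℚ) E) = (substSq P) ^ 2 := by
    have h4 : (4 : ℚ⟦X⟧) * X ^ 2 ≠ 0 := by
      apply mul_ne_zero
      · intro h
        have h0 := congrArg (PowerSeries.constantCoeff) h
        rw [map_ofNat, map_zero] at h0
        norm_num at h0
      · exact pow_ne_zero _ PowerSeries.X_ne_zero
    apply mul_left_cancel₀ h4
    have h5 := hprod
    rw [hL, map_neg, neg_eq_iff_eq_neg, neg_neg] at h5
    rw [map_mul, map_pow, rescale_X, hC2] at h5
    have h6 : S - T = 2 * (X * substSq P) := by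
      rw [hT, hS, hP]; exact sinh_eq
    rw [h6] at h5
    linear_combination h5
  have hgneg : (rescale (-1 : ℚ) E) ^ (2 * r - 1) = substSq g₁ - X * substSq g₂ := by
    have h := congrArg (rescale (-1 : ℚ)) hg
    rw [map_pow, map_add, map_mul, rescale_neg_one_X, rescale_neg_one_substSq,
      rescale_neg_one_substSq] at h
    rw [h]; ring
  have hmul : (E * rescale (-1 : ℚ) E) ^ (2 * r - 1) =
      (substSq g₁) ^ 2 - X ^ 2 * (substSq g₂) ^ 2 := by
    rw [mul_pow, hg, hgneg]; ring
  have hfin := congrArg (rescale (2 : ℚ)) hmul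
  rw [map_pow, hW, ← pow_mul] at hfin
  have hexp : 2 * (2 * r - 1) = 4 * r - 2 := by omega
  rw [hexp] at hfin
  rw [map_sub, map_pow, map_mul, map_pow, map_pow, rescale_X, hC2,
    rescale_substSq, rescale_substSq] at hfin
  have h22 : ((2 : ℚ) ^ 2) = 4 := by norm_num
  rw [h22] at hfin
  -- hfin : substSq P ^ (4r-2) = substSq (rescale 4 g₁) ^ 2 - (2*X)^2 * substSq (rescale 4 g₂) ^ 2
  apply substSq_injective
  have hX4 : substSq (4 * X * rescale 4 g₂ ^ 2) = 4 * X ^ 2 * (substSq (rescale 4 g₂)) ^ 2 := by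
    rw [substSq_mul, substSq_mul, substSq_pow, ← hC4, substSq_C, substSq_X, hC4]
  rw [substSq_sub, substSq_pow, substSq_pow, hX4, hfin]
  ring


/-- With `p(t) = Σ t^k/(2k+1)!`, `q(t) = Σ t^k/(2k)!`, and `g₁, g₂` the even/odd
parts of `((e^y−1)/y)^{2r−1}`, the matrix
`M = [[g₁(4t), −2g₂(4t)], [q g₁(4t) − 2t p g₂(4t), p g₁(4t) − 2q g₂(4t)]]`
has determinant `p(t)^{4r−1}`. -/

theorem det_M_eq_p_pow (r : ℕ) (hr : 1 ≤ r)
    (p q : PowerSeries ℚ)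
    (hp : p = PowerSeries.mk fun k => ((2 * k + 1).factorial : ℚ)⁻¹)
    (hq : q = PowerSeries.mk fun k => ((2 * k).factorial : ℚ)⁻¹)
    (g₁ g₂ : PowerSeries ℚ)
    (hg : (PowerSeries.mk fun k => ((k + 1).factorial : ℚ)⁻¹) ^ (2 * r - 1) =
      substSq g₁ + X * substSq g₂) :
    Matrix.det
      !![rescale 4 g₁, -2 * rescale 4 g₂;
         q * rescale 4 g₁ - 2 * X * p * rescale 4 g₂,
         p * rescale 4 g₁ - 2 * q * rescale 4 g₂] =
      p ^ (4 * r - 1) := by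
  have hkey := key_identity r hr g₁ g₂ hg
  rw [← hp] at hkey
  have h1 : p ^ (4 * r - 1) = p * p ^ (4 * r - 2) := by
    rw [show 4 * r - 1 = (4 * r - 2) + 1 by omega, pow_succ']
  rw [Matrix.det_fin_two_of, h1]
  linear_combination p * hkey
end

section
/- Consider the (2r−1)×(2r+1) matrix over ℤ[v] whose (i,j) entries (1 ≤ i ≤ 2r−1, 0 ≤ j ≤ 2r) are 1 if j = i−1, v if j = i, 1 if j = i+1, and 0 otherwise (the matrix of i* on elementary symmetric polynomials). Then its kernel, as a ℤ[v]-module map ℤ[v]^{2r+1} → ℤ[v]^{2r−1}, is a free ℤ[v]-module of rank 2. -/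
open Polynomial

/-- Sequence determined by the recurrence `s (k+2) = -X * s (k+1) - s k`. -/
noncomputable def chseq (a b : Polynomial ℤ) : ℕ → Polynomial ℤ
  | 0 => a
  | 1 => b
  | (k+2) => -X * chseq a b (k+1) - chseq a b k

lemma chseq_comb (y : ℕ → Polynomial ℤ) (n : ℕ)
    (hrec : ∀ k, k + 2 ≤ n → y (k+2) = -X * y (k+1) - y k) :
    ∀ k ≤ n, y k = y 0 * chseq 1 0 k + y 1 * chseq 0 1 k := by
  intro k
  induction k using Nat.strong_induction_on with
  | _ k ih =>
    match k with
    | 0 => intro _; simp [chseq]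
    | 1 => intro _; simp [chseq]
    | (k+2) =>
      intro hk
      rw [hrec k hk, ih (k+1) (by omega) (by omega), ih k (by omega) (by omega)]
      show _ = _ * chseq 1 0 (k+2) + _ * chseq 0 1 (k+2)
      rw [chseq, chseq]
      ring

/-- The linear map `(c₀, c₁) ↦ (c₀ * A (2r−j) + c₁ * B (2r−j))ⱼ`. -/
noncomputable def Lmap (r : ℕ) :
    (Fin 2 → Polynomial ℤ) →ₗ[Polynomial ℤ] (Fin (2*r+1) → Polynomial ℤ) where
  toFun c := fun j => c 0 * chseq 1 0 (2*r - (j:ℕ)) + c 1 * chseq 0 1 (2*r - (j:ℕ))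
  map_add' c d := by funext j; simp; ring
  map_smul' a c := by funext j; simp [smul_eq_mul]; ring

/-- The `(2r−1) × (2r+1)` matrix over `ℤ[v]` with entries `1, v, 1` along three
adjacent diagonals (the matrix of `i*` on elementary symmetric polynomials,
`v` an indeterminate) has kernel a free `ℤ[v]`-module of rank `2`. -/
theorem kernel_free_of_rank_two (r : ℕ) (hr : 1 ≤ r)
    (M : Matrix (Fin (2 * r - 1)) (Fin (2 * r + 1)) (Polynomial ℤ))
    (hM : M = Matrix.of fun (i : Fin (2 * r - 1)) (j : Fin (2 * r + 1)) =>
      if (j : ℕ) = (i : ℕ) then 1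
      else if (j : ℕ) = (i : ℕ) + 1 then Polynomial.X
      else if (j : ℕ) = (i : ℕ) + 2 then 1
      else 0) :
    Nonempty (Module.Basis (Fin 2) (Polynomial ℤ)
      (LinearMap.ker (Matrix.mulVecLin M))) := by
  subst hM
  -- general formula for mulVec
  have key : ∀ (x : Fin (2*r+1) → Polynomial ℤ) (i : Fin (2*r-1)),
      (Matrix.mulVecLin (Matrix.of fun (i : Fin (2 * r - 1)) (j : Fin (2 * r + 1)) =>
        if (j : ℕ) = (i : ℕ) then (1 : Polynomial ℤ)
        else if (j : ℕ) = (i : ℕ) + 1 then Polynomial.X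
        else if (j : ℕ) = (i : ℕ) + 2 then 1
        else 0) x) i
      = x ⟨i, by omega⟩ + X * x ⟨(i:ℕ)+1, by omega⟩ + x ⟨(i:ℕ)+2, by omega⟩ := by
    intro x i
    have hi : (i:ℕ) < 2*r - 1 := i.isLt
    rw [Matrix.mulVecLin_apply, Matrix.mulVec, dotProduct]
    have : ∀ j : Fin (2*r+1),
        (Matrix.of fun (i : Fin (2 * r - 1)) (j : Fin (2 * r + 1)) =>
          if (j : ℕ) = (i : ℕ) then (1 : Polynomial ℤ)
          else if (j : ℕ) = (i : ℕ) + 1 then Polynomial.X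
          else if (j : ℕ) = (i : ℕ) + 2 then 1
          else 0) i j * x j
        = (if j = (⟨i, by omega⟩ : Fin (2*r+1)) then x j else 0)
          + (if j = (⟨(i:ℕ)+1, by omega⟩ : Fin (2*r+1)) then X * x j else 0)
          + (if j = (⟨(i:ℕ)+2, by omega⟩ : Fin (2*r+1)) then x j else 0) := by
      intro j
      simp only [Matrix.of_apply, Fin.ext_iff, Fin.val_mk]
      split_ifs <;> first | (exfalso; omega) | ring1
    rw [Finset.sum_congr rfl (fun j _ => this j)]
    rw [Finset.sum_add_distrib, Finset.sum_add_distrib]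
    simp
  set A : Matrix (Fin (2*r-1)) (Fin (2*r+1)) (Polynomial ℤ) :=
    Matrix.of fun (i : Fin (2 * r - 1)) (j : Fin (2 * r + 1)) =>
      if (j : ℕ) = (i : ℕ) then (1 : Polynomial ℤ)
      else if (j : ℕ) = (i : ℕ) + 1 then Polynomial.X
      else if (j : ℕ) = (i : ℕ) + 2 then 1
      else 0 with hA
  -- range of Lmap lies in kernel
  have hmem : ∀ c, Lmap r c ∈ LinearMap.ker (Matrix.mulVecLin A) := by
    intro c
    rw [LinearMap.mem_ker]
    funext i
    rw [key]
    show (c 0 * chseq 1 0 (2*r - (i:ℕ)) + c 1 * chseq 0 1 (2*r - (i:ℕ)))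
        + X * (c 0 * chseq 1 0 (2*r - ((i:ℕ)+1)) + c 1 * chseq 0 1 (2*r - ((i:ℕ)+1)))
        + (c 0 * chseq 1 0 (2*r - ((i:ℕ)+2)) + c 1 * chseq 0 1 (2*r - ((i:ℕ)+2)))
        = (0 : Fin (2*r-1) → Polynomial ℤ) i
    have hi : (i:ℕ) < 2*r - 1 := i.isLt
    set m := 2*r - ((i:ℕ)+2) with hm
    have h1 : 2*r - (i:ℕ) = m + 2 := by omega
    have h2 : 2*r - ((i:ℕ)+1) = m + 1 := by omega
    rw [h1, h2, chseq, chseq]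
    simp
    ring
  set L' : (Fin 2 → Polynomial ℤ) →ₗ[Polynomial ℤ] LinearMap.ker (Matrix.mulVecLin A) :=
    (Lmap r).codRestrict _ hmem with hL'
  have hinj : Function.Injective L' := by
    intro c d h
    have h' : Lmap r c = Lmap r d := congrArg Subtype.val h
    funext k
    fin_cases k
    · have := congrFun h' ⟨2*r, by omega⟩
      simpa [Lmap, chseq, Nat.sub_self] using this
    · have := congrFun h' ⟨2*r - 1, by omega⟩
      have hs : 2*r - (2*r - 1) = 1 := by omega
      simpa [Lmap, hs, chseq] using this
  have hsurj : Function.Surjective L' := by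
    rintro ⟨x, hx⟩
    rw [LinearMap.mem_ker] at hx
    set y : ℕ → Polynomial ℤ := fun k => x ⟨2*r - k, by omega⟩ with hy
    have hrec : ∀ k, k + 2 ≤ 2*r → y (k+2) = -X * y (k+1) - y k := by
      intro k hk
      have hi : 2*r - (k+2) < 2*r - 1 := by omega
      have := congrFun hx ⟨2*r - (k+2), hi⟩
      rw [key] at this
      have e0 : (2*r : ℕ) - (k+2) + 1 = 2*r - (k+1) := by omega
      have e1 : (2*r : ℕ) - (k+2) + 2 = 2*r - k := by omega
      simp only [e0, e1, Pi.zero_apply] at this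
      have : y (k+2) + X * y (k+1) + y k = 0 := this
      linear_combination this
    refine ⟨![y 0, y 1], ?_⟩
    apply Subtype.ext
    show Lmap r ![y 0, y 1] = x
    funext j
    have hj : (j:ℕ) ≤ 2*r := by omega
    have hxy : x j = y (2*r - (j:ℕ)) := by
      congr 1
      exact Fin.ext (by simp [hy]; omega)
    show y 0 * chseq 1 0 (2*r - (j:ℕ)) + y 1 * chseq 0 1 (2*r - (j:ℕ)) = x j
    rw [hxy, chseq_comb y (2*r) hrec (2*r - (j:ℕ)) (by omega)]
  exact ⟨(Pi.basisFun (Polynomial ℤ) (Fin 2)).map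
    (LinearEquiv.ofBijective L' ⟨hinj, hsurj⟩)⟩
end
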